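/- arXiv:0806.2588 — 6 statements merged into one kernel-verified Lean document; each statement's English description precedes it below -/
import Mathlib

section
/- Let k be a field, S = k[[t]], e ≥ 1, and U = (u_{ij}), V = (v_{ij}) ∈ M_n(S) with U·V = t^e·I. Suppose there is an index i₀ with 0 ≤ i₀ ≤ n such that: (1) for every column index j ≤ i₀, all entries u_{ij} lie in tS; and (2) the reductions modulo t of the columns of U with index j > i₀ are k-linearly independent vectors in k^n. Then for all indices i, j, r one has u_{ij}·v_{jr} ∈ tS. -/
/-- **Proposition 1.4.1.** Let `S = k[[t]]`, `U·V = tᵉ·I` with `e ≥ 1`. Suppose there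
is `i₀ ≤ n` such that the entries of the first `i₀` columns of `U` lie in `tS`, and the
reductions mod `t` of the remaining columns are `k`-linearly independent. Then
`u_{ij}·v_{jr} ∈ tS` for all indices `i, j, r`. -/
theorem special_basis_entry_product_div {k : Type*} [Field k] (n e : ℕ) (he : 1 ≤ e)
    (U V : Matrix (Fin n) (Fin n) (PowerSeries k))
    (hUV : U * V =
      (PowerSeries.X : PowerSeries k) ^ e • (1 : Matrix (Fin n) (Fin n) (PowerSeries k)))
    (i₀ : ℕ) (hi₀ : i₀ ≤ n)
    (hsmall : ∀ i j : Fin n, (j : ℕ) < i₀ → (PowerSeries.X : PowerSeries k) ∣ U i j)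
    (hindep : LinearIndependent k
      (fun j : {j : Fin n // i₀ ≤ (j : ℕ)} =>
        fun i : Fin n => PowerSeries.constantCoeff (U i j.1))) :
    ∀ i j r : Fin n, (PowerSeries.X : PowerSeries k) ∣ U i j * V j r := by
  classical
  set c := (PowerSeries.constantCoeff (R := k)) with hc
  have key : ∀ a b : Fin n, ∑ x : Fin n, c (U a x) * c (V x b) = 0 := by
    intro a b
    have h := congrArg (fun M : Matrix (Fin n) (Fin n) (PowerSeries k) => c (M a b)) hUV
    simpa [Matrix.mul_apply, Matrix.smul_apply, map_sum, map_mul, map_pow, hc,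
      PowerSeries.constantCoeff_X, zero_pow (by omega : e ≠ 0)] using h
  intro i j r
  rw [PowerSeries.X_dvd_iff, map_mul]
  rcases lt_or_ge (j : ℕ) i₀ with hj | hj
  · have : c (U i j) = 0 := PowerSeries.X_dvd_iff.mp (hsmall i j hj)
    rw [this, zero_mul]
  · have hV : c (V j r) = 0 := by
      have hg := Fintype.linearIndependent_iff.mp hindep
        (fun j' : {j : Fin n // i₀ ≤ (j : ℕ)} => c (V j'.1 r)) ?_ ⟨j, hj⟩
      · exact hg
      · funext a
        have hsum : ∑ x : Fin n, c (V x r) * c (U a x) = 0 := by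
          rw [← key a r]
          exact Finset.sum_congr rfl fun x _ => mul_comm _ _
        have hsub : ∑ j' : {j : Fin n // i₀ ≤ (j : ℕ)}, c (V j'.1 r) * c (U a j'.1)
            = ∑ x ∈ Finset.univ.filter (fun x : Fin n => i₀ ≤ (x : ℕ)),
              c (V x r) * c (U a x) :=
          (Finset.sum_subtype (Finset.univ.filter fun x : Fin n => i₀ ≤ (x : ℕ))
            (fun x => by simp) (fun x => c (V x r) * c (U a x))).symm
        have hfilter : ∑ x ∈ Finset.univ.filter (fun x : Fin n => i₀ ≤ (x : ℕ)),
            c (V x r) * c (U a x) = ∑ x : Fin n, c (V x r) * c (U a x) := by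
          apply Finset.sum_filter_of_ne
          intro x _ hx
          by_contra hlt
          have : c (U a x) = 0 :=
            PowerSeries.X_dvd_iff.mp (hsmall a x (by omega))
          simp [this] at hx
        calc (∑ j' : {j : Fin n // i₀ ≤ (j : ℕ)},
                c (V j'.1 r) • fun i : Fin n => c (U i j'.1)) a
            = ∑ j' : {j : Fin n // i₀ ≤ (j : ℕ)}, c (V j'.1 r) * c (U a j'.1) := by
              simp [Finset.sum_apply]
          _ = 0 := by rw [hsub, hfilter, hsum]
    rw [hV, mul_zero]
end

section
/- Let p ≥ 2 be an integer, e > 0 a real number, and set e* = e·p/(p−1). For each natural number n define g_n : ℝ → ℝ by g_n(x) = x if x ≤ e*·p^n, and g_n(x) = e*·p^n + (x − e*·p^n)/p if x ≥ e*·p^n. Then for every n ≥ 1, the composite (g_0 ∘ g_1 ∘ ⋯ ∘ g_{n−1}) evaluated at e*·p^{n−1} equals e* + e·(n−1). -/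
/-- `iterComp g n = g 0 ∘ g 1 ∘ ⋯ ∘ g (n-1)` (with `g (n-1)` applied first). -/
def iterComp (g : ℕ → ℝ → ℝ) : ℕ → ℝ → ℝ
  | 0 => id
  | n + 1 => iterComp g n ∘ g n

/-- For the Herbrand functions `g_n` of the Kummer tower, the composite
`g_0 ∘ ⋯ ∘ g_{n-1}` evaluated at `e*·p^{n-1}` equals `e* + e·(n-1)`. -/
theorem herbrand_composite_value (p : ℕ) (hp : 2 ≤ p) (e : ℝ) (he : 0 < e)
    (estar : ℝ) (hestar : estar = e * p / ((p : ℝ) - 1))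
    (g : ℕ → ℝ → ℝ)
    (hg : ∀ (n : ℕ) (x : ℝ),
      g n x = if x ≤ estar * (p : ℝ) ^ n then x
        else estar * (p : ℝ) ^ n + (x - estar * (p : ℝ) ^ n) / p) :
    ∀ n : ℕ, 1 ≤ n →
      iterComp g n (estar * (p : ℝ) ^ (n - 1)) = estar + e * ((n : ℝ) - 1) := by
  have hp1 : (1 : ℝ) < (p : ℝ) := by exact_mod_cast Nat.lt_of_lt_of_le one_lt_two hp
  have hp0 : (0 : ℝ) < (p : ℝ) := lt_trans one_pos hp1
  have hpm1 : (0 : ℝ) < (p : ℝ) - 1 := by linarith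
  have hes0 : 0 < estar := by
    rw [hestar]; positivity
  have hes : estar * ((p : ℝ) - 1) = e * p := by
    rw [hestar]; field_simp
  have key : ∀ k : ℕ, ∀ c : ℝ, 0 ≤ c →
      iterComp g k (estar * (p : ℝ) ^ k + c) = estar + e * k + c / (p : ℝ) ^ k := by
    intro k
    induction k with
    | zero => intro c hc; simp [iterComp]
    | succ k ih =>
      intro c hc
      have hpk : (0 : ℝ) < (p : ℝ) ^ k := by positivity
      have hgx : g k (estar * (p : ℝ) ^ (k + 1) + c)
          = estar * (p : ℝ) ^ k + (e * (p : ℝ) ^ k + c / p) := by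
        rw [hg]
        rw [if_neg (by
          intro h
          have hpow : (p : ℝ) ^ (k+1) = (p:ℝ)^k * p := by ring
          nlinarith [mul_pos hes0 hpk] : ¬ estar * (p : ℝ) ^ (k + 1) + c ≤ estar * (p : ℝ) ^ k)]
        have : estar * (p : ℝ) ^ (k + 1) + c - estar * (p : ℝ) ^ k
            = estar * ((p : ℝ) - 1) * (p : ℝ) ^ k + c := by ring
        rw [this, hes]
        field_simp
      show iterComp g k (g k (estar * (p : ℝ) ^ (k + 1) + c)) = _
      rw [hgx, ih _ (by positivity)]
      push_cast
      field_simp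
      ring
  intro n hn
  obtain ⟨m, rfl⟩ : ∃ m, n = m + 1 := ⟨n - 1, (Nat.succ_pred_eq_of_pos hn).symm⟩
  have h1 : m + 1 - 1 = m := rfl
  rw [h1]
  show iterComp g m (g m (estar * (p : ℝ) ^ m)) = _
  rw [hg, if_pos le_rfl]
  have := key m 0 le_rfl
  rw [add_zero] at this
  rw [this]
  push_cast
  ring
end

section
/- Let B be a commutative ring and A a commutative B-algebra. Suppose θ, θ₁ ∈ A and F, F₁ ∈ B[X] are monic polynomials such that the B-algebra maps B[X]/(F) → A and B[X]/(F₁) → A sending X to θ and to θ₁ respectively are isomorphisms. Then the ideals of A generated by F′(θ) and by F₁′(θ₁) coincide: (F′(θ)) = (F₁′(θ₁)). -/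
open Polynomial

lemma different_mem_aux {B A : Type*} [CommRing B] [CommRing A] [Algebra B A]
    (θ θ₁ : A) (F F₁ : Polynomial B)
    (hsurj : Function.Surjective (Polynomial.aeval θ : Polynomial B →ₐ[B] A))
    (hker : RingHom.ker (Polynomial.aeval θ : Polynomial B →ₐ[B] A) =
      Ideal.span ({F} : Set (Polynomial B)))
    (hsurj₁ : Function.Surjective (Polynomial.aeval θ₁ : Polynomial B →ₐ[B] A))
    (hF₁0 : Polynomial.aeval θ₁ F₁ = 0) :
    Polynomial.aeval θ₁ (Polynomial.derivative F₁) ∈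
      Ideal.span ({Polynomial.aeval θ (Polynomial.derivative F)} : Set A) := by
  obtain ⟨G, hG⟩ := hsurj θ₁
  obtain ⟨H, hH⟩ := hsurj₁ θ
  have hFθ : aeval θ F = 0 := by
    have : F ∈ RingHom.ker (Polynomial.aeval θ : Polynomial B →ₐ[B] A) := by
      rw [hker]; exact Ideal.mem_span_singleton_self F
    exact this
  -- F₁.comp G ∈ (F)
  have h1 : F ∣ F₁.comp G := by
    rw [← Ideal.mem_span_singleton, ← hker]
    show aeval θ (F₁.comp G) = 0
    rw [aeval_comp, hG, hF₁0]
  obtain ⟨Q, hQ⟩ := h1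
  -- H.comp G - X ∈ (F)
  have h2 : F ∣ H.comp G - X := by
    rw [← Ideal.mem_span_singleton, ← hker]
    show aeval θ (H.comp G - X) = 0
    rw [map_sub, aeval_comp, hG, hH, aeval_X, sub_self]
  obtain ⟨P, hP⟩ := h2
  -- differentiate
  have d1 := congrArg (aeval θ ∘ derivative) hQ
  have d2 := congrArg (aeval θ ∘ derivative) (sub_eq_iff_eq_add.mp hP)
  simp only [Function.comp_apply, derivative_comp, derivative_mul, derivative_X,
    map_add, map_mul, map_one, aeval_comp, hG, hFθ, zero_mul, mul_zero, add_zero,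
    zero_add] at d1 d2
  -- d1 : aeval θ₁ (derivative F₁) * g' = f' * q
  -- d2 : aeval θ₁ (derivative H) * g' = f' * p + 1
  rw [Ideal.mem_span_singleton]
  refine ⟨aeval θ₁ (derivative H) * aeval θ Q -
    aeval θ₁ (derivative F₁) * aeval θ P, ?_⟩
  set g' := aeval θ (derivative G)
  set f' := aeval θ (derivative F)
  set f₁' := aeval θ₁ (derivative F₁)
  set h' := aeval θ₁ (derivative H)
  linear_combination h' * d1 - f₁' * d2

/-- **Proposition 5.1.1(b).** If `A = B[θ] = B[X]/(F) = B[θ₁] = B[X]/(F₁)` (with `F, F₁`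
monic), then the ideals `(F′(θ))` and `(F₁′(θ₁))` of `A` coincide: the different of a
monogenic algebra is well defined. -/
theorem different_well_defined {B A : Type*} [CommRing B] [CommRing A] [Algebra B A]
    (θ θ₁ : A) (F F₁ : Polynomial B) (hF : F.Monic) (hF₁ : F₁.Monic)
    (hsurj : Function.Surjective (Polynomial.aeval θ : Polynomial B →ₐ[B] A))
    (hker : RingHom.ker (Polynomial.aeval θ : Polynomial B →ₐ[B] A) =
      Ideal.span ({F} : Set (Polynomial B)))
    (hsurj₁ : Function.Surjective (Polynomial.aeval θ₁ : Polynomial B →ₐ[B] A))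
    (hker₁ : RingHom.ker (Polynomial.aeval θ₁ : Polynomial B →ₐ[B] A) =
      Ideal.span ({F₁} : Set (Polynomial B))) :
    Ideal.span ({Polynomial.aeval θ (Polynomial.derivative F)} : Set A) =
      Ideal.span ({Polynomial.aeval θ₁ (Polynomial.derivative F₁)} : Set A) := by
  have hF0 : aeval θ F = 0 := by
    have : F ∈ RingHom.ker (Polynomial.aeval θ : Polynomial B →ₐ[B] A) := by
      rw [hker]; exact Ideal.mem_span_singleton_self F
    exact this
  have hF₁0 : aeval θ₁ F₁ = 0 := by
    have : F₁ ∈ RingHom.ker (Polynomial.aeval θ₁ : Polynomial B →ₐ[B] A) := by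
      rw [hker₁]; exact Ideal.mem_span_singleton_self F₁
    exact this
  apply le_antisymm <;> rw [Ideal.span_le, Set.singleton_subset_iff]
  · exact different_mem_aux θ₁ θ F₁ F hsurj₁ hker₁ hsurj hF0
  · exact different_mem_aux θ θ₁ F F₁ hsurj hker hsurj₁ hF₁0
end

section
/- Let p be a prime, l(X) = ∑_{n≥0} X^{p^n}/p^n ∈ ℚ[[X]], and let l^{−1} be its compositional inverse (the unique power series with zero constant term satisfying l(l^{−1}(X)) = X). Define [p](X) = l^{−1}(p·l(X)) ∈ ℚ[[X]]. Then the coefficient of X in [p](X) equals p, and the coefficient of X^p in [p](X) equals 1 − p^{p−1}. -/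
open PowerSeries

-- The Lubin–Tate logarithm `l(X) = ∑_{n ≥ 0} X^{p^n} / p^n ∈ ℚ[[X]]`.
open Classical in
noncomputable def lubinTateLog (p : ℕ) : PowerSeries ℚ :=
  PowerSeries.mk fun n => if ∃ m : ℕ, n = p ^ m then ((p : ℚ) ^ Nat.log p n)⁻¹ else 0

/-- Composition (substitution) `f(g)` of formal power series, intended for `g` with zero
constant term: the coefficient of `X^n` in `f(g)` is `∑_{k ≤ n} f_k · (g^k)_n`. -/
noncomputable def psComp (f g : PowerSeries ℚ) : PowerSeries ℚ :=
  PowerSeries.mk fun n =>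
    ∑ k ∈ Finset.range (n + 1), PowerSeries.coeff k f * PowerSeries.coeff n (g ^ k)

open Classical in
lemma lubinTateLog_coeff (p n : ℕ) :
    PowerSeries.coeff n (lubinTateLog p) =
      if ∃ m : ℕ, n = p ^ m then ((p : ℚ) ^ Nat.log p n)⁻¹ else 0 := by
  simp [lubinTateLog]

lemma lubinTateLog_coeff_one (p : ℕ) : PowerSeries.coeff 1 (lubinTateLog p) = 1 := by
  rw [lubinTateLog_coeff, if_pos ⟨0, (pow_zero p).symm⟩, Nat.log_one_right]
  simp

lemma lubinTateLog_coeff_self (p : ℕ) (hp : p.Prime) :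
    PowerSeries.coeff p (lubinTateLog p) = (p : ℚ)⁻¹ := by
  have hlog : Nat.log p p = 1 := by
    have := Nat.log_pow hp.one_lt 1
    rwa [pow_one] at this
  rw [lubinTateLog_coeff, if_pos ⟨1, (pow_one p).symm⟩, hlog, pow_one]

lemma lubinTateLog_coeff_eq_zero (p : ℕ) (hp : p.Prime) (k : ℕ) (hk : k ≤ p)
    (h1 : k ≠ 1) (h2 : k ≠ p) : PowerSeries.coeff k (lubinTateLog p) = 0 := by
  rw [lubinTateLog_coeff, if_neg]
  rintro ⟨m, rfl⟩
  rcases Nat.eq_zero_or_pos m with rfl | hm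
  · exact h1 (pow_zero p)
  · have : p ^ 1 ≤ p ^ m := Nat.pow_le_pow_right hp.pos hm
    rw [pow_one] at this
    exact h2 (le_antisymm hk this)

/-- coefficients of a power of `c·X + (higher order)` -/
lemma coeff_C_mul_X_add_pow (c : ℚ) (f : PowerSeries ℚ) (d k n : ℕ) (hd : 1 ≤ d)
    (hf : (X : PowerSeries ℚ) ^ d ∣ f) (hn : n + 1 < k + d) :
    PowerSeries.coeff n ((PowerSeries.C c * X + f) ^ k) =
      if n = k then c ^ k else 0 := by
  rw [add_comm, add_pow, map_sum, Finset.sum_eq_single 0]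
  · rw [pow_zero, one_mul, Nat.sub_zero, Nat.choose_zero_right, Nat.cast_one, mul_one,
      mul_pow, ← map_pow, coeff_C_mul, coeff_X_pow, mul_ite, mul_one, mul_zero]
  · intro j hj hj0
    have hj1 : 1 ≤ j := Nat.one_le_iff_ne_zero.mpr hj0
    have hjk : j ≤ k := Nat.lt_succ_iff.mp (Finset.mem_range.mp hj)
    have hdvd : (X : PowerSeries ℚ) ^ (d * j + (k - j)) ∣
        f ^ j * (PowerSeries.C c * X) ^ (k - j) * (k.choose j : PowerSeries ℚ) := by
      rw [pow_add]
      apply Dvd.dvd.mul_right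
      apply mul_dvd_mul
      · rw [pow_mul]
        exact pow_dvd_pow_of_dvd hf j
      · rw [mul_pow]
        exact Dvd.dvd.mul_left dvd_rfl _
    apply PowerSeries.X_pow_dvd_iff.mp hdvd
    obtain ⟨i, rfl⟩ : ∃ i, j = i + 1 := ⟨j - 1, by omega⟩
    rw [Nat.mul_succ]
    have hle : i ≤ d * i := Nat.le_mul_of_pos_left i (by omega)
    omega
  · intro h
    simp at h

/-- For `[p](X) = l⁻¹(p·l(X))` (multiplication by `p` on the Lubin–Tate formal group),
the coefficient of `X` is `p` and the coefficient of `X^p` is `1 - p^{p-1}`. -/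
theorem lubinTate_mul_p_coeffs (p : ℕ) (hp : p.Prime)
    (linv : PowerSeries ℚ) (h0 : PowerSeries.constantCoeff linv = 0)
    (hinv : psComp (lubinTateLog p) linv = PowerSeries.X) :
    PowerSeries.coeff 1 (psComp linv ((p : PowerSeries ℚ) * lubinTateLog p)) = p ∧
    PowerSeries.coeff p (psComp linv ((p : PowerSeries ℚ) * lubinTateLog p)) =
      1 - (p : ℚ) ^ (p - 1) := by
  have hp0 : (p : ℚ) ≠ 0 := Nat.cast_ne_zero.mpr hp.ne_zero
  have hp2 : 2 ≤ p := hp.two_le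
  set L := lubinTateLog p with hL
  -- coefficient function of p * L
  have hg : ∀ n, PowerSeries.coeff n ((p : PowerSeries ℚ) * L) = p * PowerSeries.coeff n L := by
    intro n
    rw [← map_natCast (PowerSeries.C (R := ℚ)) p, coeff_C_mul]
  -- coeff 1 of linv is 1
  have hlinv1 : PowerSeries.coeff 1 linv = 1 := by
    have h := congrArg (PowerSeries.coeff 1) hinv
    rw [psComp, PowerSeries.coeff_mk, PowerSeries.coeff_X] at h
    rw [Finset.sum_range_succ, Finset.sum_range_one] at h
    simp only [pow_zero, pow_one] at h
    rw [PowerSeries.coeff_one, lubinTateLog_coeff_one] at h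
    simpa using h
  -- X^2 divides linv - X
  have hr : (X : PowerSeries ℚ) ^ 2 ∣ (linv - X) := by
    rw [PowerSeries.X_pow_dvd_iff]
    intro m hm
    interval_cases m
    · simp [h0, PowerSeries.coeff_zero_eq_constantCoeff]
    · simp [hlinv1]
  -- coeff p of linv ^ p
  have hlp : PowerSeries.coeff p (linv ^ p) = 1 := by
    have : linv = PowerSeries.C 1 * X + (linv - X) := by rw [map_one, one_mul]; ring
    rw [this, coeff_C_mul_X_add_pow 1 _ 2 p p (by norm_num) hr (by omega)]
    simp
  -- coeff p of linv
  have hlinvp : PowerSeries.coeff p linv = -(p : ℚ)⁻¹ := by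
    have h := congrArg (PowerSeries.coeff p) hinv
    rw [psComp, PowerSeries.coeff_mk, PowerSeries.coeff_X, if_neg (by omega)] at h
    rw [← Finset.sum_subset (s₁ := ({1, p} : Finset ℕ))
      (by intro x hx; simp at hx; simp; omega)
      (by
        intro x hx hx'
        simp at hx hx'
        rcases Nat.eq_zero_or_pos x with rfl | hxpos
        · simp [PowerSeries.coeff_one, hp.ne_zero]
        · rw [lubinTateLog_coeff_eq_zero p hp x (by omega) (by omega) hx'.2, zero_mul])] at h
    rw [Finset.sum_pair (by omega)] at h
    rw [lubinTateLog_coeff_one, lubinTateLog_coeff_self p hp, pow_one, hlp] at h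
    have : PowerSeries.coeff p linv + (p:ℚ)⁻¹ = 0 := by linarith [h]
    linarith [this]
  -- X^p divides p*L - C p * X
  have hh : (X : PowerSeries ℚ) ^ p ∣ ((p : PowerSeries ℚ) * L - PowerSeries.C (p:ℚ) * X) := by
    rw [PowerSeries.X_pow_dvd_iff]
    intro m hm
    rw [map_sub, hg, coeff_C_mul, PowerSeries.coeff_X]
    rcases Nat.eq_zero_or_pos m with rfl | hmpos
    · rw [lubinTateLog_coeff, if_neg (by rintro ⟨i, hi⟩; exact (Nat.pow_pos hp.pos (n := i)).ne' hi.symm)]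
      simp
    · rcases eq_or_ne m 1 with rfl | hm1
      · rw [lubinTateLog_coeff_one]
        simp
      · rw [lubinTateLog_coeff_eq_zero p hp m (by omega) hm1 (by omega)]
        simp [hm1]
  -- coeff p of (p*L)^k for 2 ≤ k ≤ p
  have hgk : ∀ k, 2 ≤ k → PowerSeries.coeff p (((p : PowerSeries ℚ) * L) ^ k) =
      if p = k then (p:ℚ) ^ k else 0 := by
    intro k hk
    have : (p : PowerSeries ℚ) * L =
        PowerSeries.C (p:ℚ) * X + ((p : PowerSeries ℚ) * L - PowerSeries.C (p:ℚ) * X) := by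
      ring
    rw [this, coeff_C_mul_X_add_pow _ _ p k p (by omega) hh (by omega)]
  -- first goal
  constructor
  · rw [psComp, PowerSeries.coeff_mk, Finset.sum_range_succ, Finset.sum_range_one]
    simp only [pow_zero, pow_one]
    rw [PowerSeries.coeff_one, hg, lubinTateLog_coeff_one, hlinv1]
    simp
  · rw [psComp, PowerSeries.coeff_mk]
    rw [← Finset.sum_subset (s₁ := ({1, p} : Finset ℕ))
      (by intro x hx; simp at hx; simp; omega)
      (by
        intro x hx hx'
        simp at hx hx'
        rcases Nat.eq_zero_or_pos x with rfl | hxpos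
        · simp [PowerSeries.coeff_one, hp.ne_zero]
        · rw [hgk x (by omega), if_neg (by omega), mul_zero])]
    rw [Finset.sum_pair (by omega)]
    rw [pow_one, hg, lubinTateLog_coeff_self p hp, hlinv1, hgk p (by omega), if_pos rfl, hlinvp]
    rw [mul_inv_cancel₀ hp0]
    have hpp : (p:ℚ) ^ p = (p:ℚ) * (p:ℚ) ^ (p - 1) := by
      rw [← pow_succ']
      congr 1
      omega
    rw [hpp]
    field_simp
    ring
end

section
/- Let O be a discrete valuation ring with uniformizer π, p a prime with p ≥ 3, and suppose p = w·π^{ep} for some unit w ∈ O^× and integer e ≥ 1. Let A, B ∈ M_n(O) satisfy: (1) A·B ≡ π^e·I modulo p·M_n(O); and (2) A_{ir}·B_{rj} ∈ πO for all indices i, r, j. Let A^{(p)} denote the matrix with entries A_{ij}^p. Then there exists C ∈ M_n(O) such that A^{(p)}·C = p·I and moreover A_{ir}·C_{rj} ∈ πO for all i, r, j. -/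
open Finset

/-- Binomial step: if `π ∣ a` and `π ∣ b` then `p·πᵖ ∣ (a+b)ᵖ - aᵖ - bᵖ`. -/
private lemma binom_aux {O : Type*} [CommRing O] {π : O} {p : ℕ} (hp : p.Prime)
    {a b : O} (ha : π ∣ a) (hb : π ∣ b) :
    (p : O) * π ^ p ∣ (a + b) ^ p - a ^ p - b ^ p := by
  obtain ⟨q, hq⟩ : ∃ q, p = q + 2 := ⟨p - 2, by have := hp.two_le; omega⟩
  subst hq
  rw [add_pow]
  rw [Finset.sum_range_succ, Finset.sum_range_succ']
  have h0 : a ^ 0 * b ^ (q + 2 - 0) * ((q + 2).choose 0 : O) = b ^ (q + 2) := by simp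
  have hl : a ^ (q + 2) * b ^ (q + 2 - (q + 2)) * ((q + 2).choose (q + 2) : O)
      = a ^ (q + 2) := by simp
  rw [h0, hl]
  have : (∑ i ∈ range (q + 1),
        a ^ (i + 1) * b ^ (q + 2 - (i + 1)) * ((q + 2).choose (i + 1) : O))
      + b ^ (q + 2) + a ^ (q + 2) - a ^ (q + 2) - b ^ (q + 2)
      = ∑ i ∈ range (q + 1),
        a ^ (i + 1) * b ^ (q + 2 - (i + 1)) * ((q + 2).choose (i + 1) : O) := by ring
  rw [this]
  refine Finset.dvd_sum fun i hi => ?_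
  have hi' : i + 1 < q + 2 := by
    have := Finset.mem_range.mp hi; omega
  have hchoose : ((q + 2 : ℕ) : O) ∣ ((q + 2).choose (i + 1) : O) :=
    Nat.cast_dvd_cast (Nat.Prime.dvd_choose_self hp (Nat.succ_ne_zero i) hi')
  have hpi : π ^ (q + 2) ∣ a ^ (i + 1) * b ^ (q + 2 - (i + 1)) := by
    have h1 : π ^ (i + 1) ∣ a ^ (i + 1) := pow_dvd_pow_of_dvd ha _
    have h2 : π ^ (q + 2 - (i + 1)) ∣ b ^ (q + 2 - (i + 1)) := pow_dvd_pow_of_dvd hb _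
    have : π ^ (i + 1) * π ^ (q + 2 - (i + 1)) = π ^ (q + 2) := by
      rw [← pow_add]; congr 1; omega
    calc π ^ (q + 2) = π ^ (i + 1) * π ^ (q + 2 - (i + 1)) := this.symm
      _ ∣ a ^ (i + 1) * b ^ (q + 2 - (i + 1)) := mul_dvd_mul h1 h2
  have : a ^ (i + 1) * b ^ (q + 2 - (i + 1)) * ((q + 2).choose (i + 1) : O)
      = ((q + 2).choose (i + 1) : O) * (a ^ (i + 1) * b ^ (q + 2 - (i + 1))) := by ring
  rw [this]
  exact mul_dvd_mul hchoose hpi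

/-- Freshman's dream mod `p·πᵖ` for sums of elements of `πO`. -/
private lemma sum_pow_aux {O : Type*} [CommRing O] {π : O} {p : ℕ} (hp : p.Prime)
    {ι : Type*} (s : Finset ι) (x : ι → O) (hx : ∀ i ∈ s, π ∣ x i) :
    (p : O) * π ^ p ∣ (∑ i ∈ s, x i) ^ p - ∑ i ∈ s, x i ^ p := by
  induction s using Finset.cons_induction with
  | empty => simp [zero_pow hp.ne_zero]
  | cons a s has ih =>
    rw [Finset.sum_cons, Finset.sum_cons]
    have hS : π ∣ ∑ i ∈ s, x i :=
      Finset.dvd_sum fun i hi => hx i (Finset.mem_cons_of_mem hi)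
    have h1 := binom_aux (π := π) hp (hx a (Finset.mem_cons_self a s)) hS
    have h2 := ih fun i hi => hx i (Finset.mem_cons_of_mem hi)
    have key : (x a + ∑ i ∈ s, x i) ^ p - (x a ^ p + ∑ i ∈ s, x i ^ p)
        = ((x a + ∑ i ∈ s, x i) ^ p - x a ^ p - (∑ i ∈ s, x i) ^ p)
          + ((∑ i ∈ s, x i) ^ p - ∑ i ∈ s, x i ^ p) := by ring
    rw [key]
    exact dvd_add h1 h2

/-- **Lemma 2.2.2.** Let `O` be a DVR with uniformizer `π`, `p ≥ 3` prime with
`p = w·π^{ep}` (`w` a unit, `e ≥ 1`). If `A·B ≡ πᵉ·I mod p` and `A_{ir}·B_{rj} ∈ πO`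
for all indices, then there is `C` with `A^{(p)}·C = p·I` and `A_{ir}·C_{rj} ∈ πO`. -/
theorem frobenius_matrix_divides_p {O : Type*} [CommRing O] [IsDomain O]
    [IsDiscreteValuationRing O] (π : O) (hπ : Irreducible π)
    (p : ℕ) (hp : p.Prime) (hp3 : 3 ≤ p) (e : ℕ) (he : 1 ≤ e)
    (w : O) (hw : IsUnit w) (hpw : (p : O) = w * π ^ (e * p))
    (n : ℕ) (A B : Matrix (Fin n) (Fin n) O)
    (h1 : ∃ D : Matrix (Fin n) (Fin n) O,
      A * B = π ^ e • (1 : Matrix (Fin n) (Fin n) O) + (p : O) • D)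
    (h2 : ∀ i r j : Fin n, A i r * B r j ∈ Ideal.span ({π} : Set O)) :
    ∃ C : Matrix (Fin n) (Fin n) O,
      A.map (· ^ p) * C = (p : O) • (1 : Matrix (Fin n) (Fin n) O) ∧
      ∀ i r j : Fin n, A i r * C r j ∈ Ideal.span ({π} : Set O) := by
  obtain ⟨D, hD⟩ := h1
  set Ap : Matrix (Fin n) (Fin n) O := A.map (· ^ p) with hAp
  set Bp : Matrix (Fin n) (Fin n) O := B.map (· ^ p) with hBp
  -- key divisibility for each entry
  have key : ∀ i j : Fin n, ∃ m : O,
      (Ap * Bp) i j = π ^ (e * p) * (1 : Matrix (Fin n) (Fin n) O) i j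
        + π ^ (e * p + 1) * m := by
    intro i j
    set d : O := (1 : Matrix (Fin n) (Fin n) O) i j with hd
    have hAB : (A * B) i j = π ^ e * d + (p : O) * D i j := by
      rw [hD, hd]; simp [Matrix.add_apply, Matrix.smul_apply, smul_eq_mul]
    have hmul : (Ap * Bp) i j = ∑ r : Fin n, (A i r * B r j) ^ p := by
      simp [hAp, hBp, Matrix.mul_apply, Matrix.map_apply, mul_pow]
    have hsum : (A * B) i j = ∑ r : Fin n, A i r * B r j := Matrix.mul_apply
    have hx : ∀ r ∈ Finset.univ (α := Fin n), π ∣ A i r * B r j := fun r _ =>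
      (Ideal.mem_span_singleton.mp (h2 i r j))
    -- first bracket: p π^p ∣ ((AB)ij)^p - Σ (A B)^p
    have hb1 : (p : O) * π ^ p ∣ ((A * B) i j) ^ p - (Ap * Bp) i j := by
      rw [hmul, hsum]
      exact sum_pow_aux hp Finset.univ _ hx
    -- (π^e d)^p = π^(e p) * d since d ∈ {0,1}
    have hdp : (π ^ e * d) ^ p = π ^ (e * p) * d := by
      have : d = 0 ∨ d = 1 := by
        rw [hd, Matrix.one_apply]; split <;> simp
      rcases this with h | h <;>
        simp [h, mul_pow, ← pow_mul, zero_pow hp.ne_zero]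
    -- second bracket
    have hb2 : π ^ (e * p + e * (p - 1)) ∣ ((A * B) i j) ^ p - (π ^ e * d) ^ p := by
      rw [← geom_sum₂_mul ((A * B) i j) (π ^ e * d) p]
      have hA : π ^ e ∣ (A * B) i j := by
        rw [hAB]
        refine dvd_add (Dvd.intro d rfl) ?_
        rw [hpw]
        have : π ^ e ∣ π ^ (e * p) :=
          pow_dvd_pow π (by nlinarith [hp.two_le])
        exact Dvd.dvd.mul_right (this.mul_left w) _
      have hB : π ^ e ∣ π ^ e * d := Dvd.intro d rfl
      have hfac : π ^ (e * (p - 1)) ∣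
          ∑ k ∈ range p, ((A * B) i j) ^ k * (π ^ e * d) ^ (p - 1 - k) := by
        refine Finset.dvd_sum fun k hk => ?_
        have hk' : k < p := Finset.mem_range.mp hk
        have e1 : π ^ (e * k) ∣ ((A * B) i j) ^ k := by
          rw [pow_mul]; exact pow_dvd_pow_of_dvd hA _
        have e2 : π ^ (e * (p - 1 - k)) ∣ (π ^ e * d) ^ (p - 1 - k) := by
          rw [pow_mul]; exact pow_dvd_pow_of_dvd hB _
        have : π ^ (e * k) * π ^ (e * (p - 1 - k)) = π ^ (e * (p - 1)) := by
          rw [← pow_add]; congr 1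
          have : k ≤ p - 1 := by omega
          rw [← Nat.mul_add]; congr 1; omega
        calc π ^ (e * (p - 1)) = π ^ (e * k) * π ^ (e * (p - 1 - k)) := this.symm
          _ ∣ _ := mul_dvd_mul e1 e2
      have hdiff : π ^ (e * p) ∣ (A * B) i j - π ^ e * d := by
        have : (A * B) i j - π ^ e * d = (p : O) * D i j := by rw [hAB]; ring
        rw [this, hpw]
        exact (dvd_mul_left _ _).mul_right _
      have := mul_dvd_mul hfac hdiff
      calc π ^ (e * p + e * (p - 1)) = π ^ (e * (p - 1)) * π ^ (e * p) := by
            rw [← pow_add]; ring_nf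
        _ ∣ _ := this
    -- combine: π^(e p + 1) divides the entry difference
    have hcomb : π ^ (e * p + 1) ∣ (Ap * Bp) i j - π ^ (e * p) * d := by
      have split : (Ap * Bp) i j - π ^ (e * p) * d
          = (((A * B) i j) ^ p - (π ^ e * d) ^ p)
            - (((A * B) i j) ^ p - (Ap * Bp) i j) := by
        rw [hdp]; ring
      rw [split]
      refine dvd_sub ?_ ?_
      · refine (pow_dvd_pow π ?_).trans hb2
        have : 1 ≤ e * (p - 1) := by
          have : 1 ≤ p - 1 := by omega
          nlinarith
        omega
      · refine dvd_trans ?_ hb1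
        rw [hpw]
        have h1' : π ^ (e * p + 1) ∣ π ^ (e * p) * π ^ p := by
          rw [← pow_add]
          exact pow_dvd_pow π (by omega)
        calc π ^ (e * p + 1) ∣ π ^ (e * p) * π ^ p := h1'
          _ ∣ w * π ^ (e * p) * π ^ p := ⟨w, by ring⟩
    obtain ⟨m, hm⟩ := hcomb
    exact ⟨m, by rw [← hm]; ring⟩
  choose M hM using key
  set Mm : Matrix (Fin n) (Fin n) O := Matrix.of fun i j => M i j with hMm
  set N : Matrix (Fin n) (Fin n) O := 1 + π • Mm with hN
  have hApBp : Ap * Bp = π ^ (e * p) • N := by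
    ext i j
    rw [hN]
    simp only [Matrix.smul_apply, Matrix.add_apply, Matrix.smul_apply, smul_eq_mul,
      hMm, Matrix.of_apply]
    rw [hM i j]; ring
  -- N is invertible: det N ≡ 1 mod π, and O is local
  have hdet : IsUnit N.det := by
    have hmapN : N.map (Ideal.Quotient.mk (Ideal.span ({π} : Set O))) = 1 := by
      ext i j
      simp only [Matrix.map_apply, hN, Matrix.add_apply, Matrix.smul_apply, smul_eq_mul]
      rw [map_add]
      have : Ideal.Quotient.mk (Ideal.span ({π} : Set O)) (π * Mm i j) = 0 := by
        rw [Ideal.Quotient.eq_zero_iff_mem, Ideal.mem_span_singleton]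
        exact dvd_mul_right _ _
      rw [this, add_zero]
      by_cases h : i = j <;> simp [Matrix.one_apply, h]
    have hdetmap : Ideal.Quotient.mk (Ideal.span ({π} : Set O)) N.det = 1 := by
      rw [RingHom.map_det, RingHom.mapMatrix_apply, hmapN, Matrix.det_one]
    have hmem : N.det - 1 ∈ Ideal.span ({π} : Set O) := by
      rw [← Ideal.Quotient.eq_zero_iff_mem, map_sub, hdetmap, map_one, sub_self]
    by_contra hnu
    have hmaxmem : N.det ∈ IsLocalRing.maximalIdeal O :=
      (IsLocalRing.mem_maximalIdeal _).mpr hnu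
    have hπmem : Ideal.span ({π} : Set O) ≤ IsLocalRing.maximalIdeal O := by
      rw [Ideal.span_le]
      intro x hx
      rcases hx with rfl
      exact (IsLocalRing.mem_maximalIdeal _).mpr hπ.not_isUnit
    have h1mem : (1 : O) ∈ IsLocalRing.maximalIdeal O := by
      have := Ideal.sub_mem (IsLocalRing.maximalIdeal O) hmaxmem (hπmem hmem)
      simpa using this
    exact (IsLocalRing.maximalIdeal.isMaximal O).ne_top (Ideal.eq_top_of_isUnit_mem _ h1mem isUnit_one)
  have hNunit : IsUnit N := (Matrix.isUnit_iff_isUnit_det N).mpr hdet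
  obtain ⟨u, hu⟩ := hNunit
  set V : Matrix (Fin n) (Fin n) O := ↑u⁻¹ with hV
  refine ⟨w • (Bp * V), ?_, ?_⟩
  · have hNV : N * V = 1 := by rw [← hu, hV, Units.mul_inv]
    calc Ap * (w • (Bp * V)) = w • (Ap * Bp * V) := by
          rw [Matrix.mul_smul, Matrix.mul_assoc]
      _ = w • (π ^ (e * p) • (N * V)) := by rw [hApBp, Matrix.smul_mul]
      _ = (w * π ^ (e * p)) • (1 : Matrix (Fin n) (Fin n) O) := by
          rw [hNV, smul_smul]
      _ = (p : O) • (1 : Matrix (Fin n) (Fin n) O) := by rw [← hpw]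
  · intro i r j
    rw [Ideal.mem_span_singleton]
    have hentry : (w • (Bp * V)) r j = w * ∑ s : Fin n, B r s ^ p * V s j := by
      simp [Matrix.smul_apply, Matrix.mul_apply, hBp, Matrix.map_apply, smul_eq_mul]
    rw [hentry]
    have : A i r * (w * ∑ s : Fin n, B r s ^ p * V s j)
        = w * ∑ s : Fin n, (A i r * B r s ^ p) * V s j := by
      rw [Finset.mul_sum, Finset.mul_sum, Finset.mul_sum]
      exact Finset.sum_congr rfl fun s _ => by ring
    rw [this]
    refine Dvd.dvd.mul_left ?_ w
    refine Finset.dvd_sum fun s _ => ?_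
    refine Dvd.dvd.mul_right ?_ _
    obtain ⟨k, hk⟩ : ∃ k, p = k + 1 := ⟨p - 1, by omega⟩
    have hAB : π ∣ A i r * B r s := Ideal.mem_span_singleton.mp (h2 i r s)
    calc π ∣ (A i r * B r s) * B r s ^ k := hAB.mul_right _
      _ = A i r * B r s ^ p := by rw [hk]; ring
end

section
/- Let O be a commutative ring, β ∈ O, W = (w_{ji}) ∈ M_u(O), and let A = O[Z_1,…,Z_u]/J where J is the ideal generated by the elements Z_i^p − β·∑_j w_{ji} Z_j for 1 ≤ i ≤ u (p a prime). Let I be the ideal of A generated by the images of Z_1,…,Z_u. If α_1,…,α_u ∈ O are such that α_1 Z_1 + ⋯ + α_u Z_u ∈ I^p + p·A, then every α_i lies in the ideal p·O + β·O. -/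
open MvPolynomial

lemma constCoeff_zero_of_mem_spanX {R : Type*} [CommRing R] {n : Type*}
    {f : MvPolynomial n R} (hf : f ∈ Ideal.span (Set.range (X : n → MvPolynomial n R))) :
    coeff 0 f = 0 := by
  have hle : Ideal.span (Set.range (X : n → MvPolynomial n R)) ≤
      RingHom.ker (constantCoeff (R := R) (σ := n)) := by
    rw [Ideal.span_le]
    rintro _ ⟨i, rfl⟩
    simp [RingHom.mem_ker]
  have := hle hf
  rwa [RingHom.mem_ker, constantCoeff_eq] at this

lemma coeff_single_zero_of_mem_sq {R : Type*} [CommRing R] {n : Type*} [DecidableEq n]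
    {f : MvPolynomial n R}
    (hf : f ∈ Ideal.span (Set.range (X : n → MvPolynomial n R)) ^ 2) (i : n) :
    coeff (Finsupp.single i 1) f = 0 := by
  rw [pow_two] at hf
  refine Submodule.mul_induction_on hf ?_ ?_
  · intro a ha b hb
    rw [coeff_mul]
    refine Finset.sum_eq_zero ?_
    rintro ⟨d, e⟩ hde
    rw [Finset.HasAntidiagonal.mem_antidiagonal] at hde
    by_cases hd : d = 0
    · subst hd
      rw [constCoeff_zero_of_mem_spanX ha, zero_mul]
    · have he : e = 0 := by
        have hdi : d i ≠ 0 := by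
          intro h0
          apply hd
          ext j
          have hj' := DFunLike.congr_fun hde j
          simp only [Finsupp.add_apply, Finsupp.single_apply, Finsupp.coe_zero,
            Pi.zero_apply] at hj' ⊢
          by_cases hj : i = j
          · subst hj; simp [h0]
          · simp [hj] at hj'; omega
        ext j
        have hj' := DFunLike.congr_fun hde j
        simp only [Finsupp.add_apply, Finsupp.single_apply, Finsupp.coe_zero,
          Pi.zero_apply] at hj' ⊢
        by_cases hj : i = j
        · subst hj; simp at hj'; omega
        · simp [hj] at hj'; omega
      subst he
      rw [constCoeff_zero_of_mem_spanX hb, mul_zero]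
  · intro x y hx hy
    simp [coeff_add, hx, hy]

set_option synthInstance.maxHeartbeats 1000000

/-- The ideal of relations `Z_i^p = β·∑_j w_{ji} Z_j` defining the algebra
`A = O[Z₁,…,Z_u]/J` of Lemma 2.3.5. -/
noncomputable def relIdeal {O : Type*} [CommRing O] (p u : ℕ) (β : O)
    (W : Matrix (Fin u) (Fin u) O) : Ideal (MvPolynomial (Fin u) O) :=
  Ideal.span (Set.range fun i : Fin u =>
    MvPolynomial.X i ^ p -
      MvPolynomial.C β * ∑ j : Fin u, MvPolynomial.C (W j i) * MvPolynomial.X j)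

/-- **Lemma 2.3.5.** In `A = O[Z₁,…,Z_u]/(Z_i^p - β ∑_j w_{ji} Z_j)`, if a linear form
`∑ αᵢ Zᵢ` lies in `I^p + pA` (with `I` the augmentation ideal generated by the `Zᵢ`),
then every `αᵢ` lies in `pO + βO`. -/
theorem linear_form_in_aug_pow {O : Type*} [CommRing O] (p : ℕ) (hp : p.Prime)
    (u : ℕ) (β : O) (W : Matrix (Fin u) (Fin u) O) (α : Fin u → O)
    (h : (∑ i : Fin u,
        Ideal.Quotient.mk (relIdeal p u β W) (MvPolynomial.C (α i) * MvPolynomial.X i)) ∈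
      (Ideal.span (Set.range fun i : Fin u =>
          Ideal.Quotient.mk (relIdeal p u β W) (MvPolynomial.X i))) ^ p +
        Ideal.span ({(p : MvPolynomial (Fin u) O ⧸ relIdeal p u β W)} :
          Set (MvPolynomial (Fin u) O ⧸ relIdeal p u β W))) :
    ∀ i : Fin u, α i ∈ Ideal.span ({(p : O), β} : Set O) := by
  intro i
  set S : Ideal O := Ideal.span ({(p : O), β} : Set O) with hS
  set q : O →+* O ⧸ S := Ideal.Quotient.mk S with hq
  have hβ : q β = 0 := Ideal.Quotient.eq_zero_iff_mem.mpr
    (Ideal.subset_span (by simp))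
  have hpS : q (p : O) = 0 := Ideal.Quotient.eq_zero_iff_mem.mpr
    (Ideal.subset_span (by simp))
  set ψ : MvPolynomial (Fin u) O →+* MvPolynomial (Fin u) (O ⧸ S) :=
    MvPolynomial.map q with hψ
  set K : Ideal (MvPolynomial (Fin u) (O ⧸ S)) :=
    Ideal.span (Set.range fun i : Fin u => (X i : MvPolynomial (Fin u) (O ⧸ S)) ^ p) with hK
  set θ : MvPolynomial (Fin u) O →+* MvPolynomial (Fin u) (O ⧸ S) ⧸ K :=
    (Ideal.Quotient.mk K).comp ψ with hθ
  have hker : relIdeal p u β W ≤ RingHom.ker θ := by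
    rw [relIdeal, Ideal.span_le]
    rintro _ ⟨j, rfl⟩
    simp only [RingHom.mem_ker, SetLike.mem_coe, hθ, RingHom.comp_apply, hψ,
      map_sub, map_pow, map_mul, MvPolynomial.map_X, MvPolynomial.map_C, hβ, map_zero,
      zero_mul, sub_zero, C_0]
    exact Ideal.Quotient.eq_zero_iff_mem.mpr (Ideal.subset_span ⟨j, rfl⟩)
  set θbar : (MvPolynomial (Fin u) O ⧸ relIdeal p u β W) →+*
      MvPolynomial (Fin u) (O ⧸ S) ⧸ K :=
    Ideal.Quotient.lift _ θ (fun a ha => hker ha) with hθbar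
  -- push `h` through θbar
  have h2 := Ideal.mem_map_of_mem θbar h
  rw [Ideal.add_eq_sup, Ideal.map_sup, Ideal.map_pow (R := MvPolynomial (Fin u) O ⧸ relIdeal p u β W)
    (S := MvPolynomial (Fin u) (O ⧸ S) ⧸ K) θbar, Ideal.map_span, Ideal.map_span] at h2
  have himg : θbar '' (Set.range fun i : Fin u =>
      Ideal.Quotient.mk (relIdeal p u β W) (MvPolynomial.X i)) =
      Set.range fun i : Fin u =>
        Ideal.Quotient.mk K (X i : MvPolynomial (Fin u) (O ⧸ S)) := by
    rw [← Set.range_comp]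
    exact congrArg Set.range (funext fun j => by simp [hθbar, hθ, hψ])
  have hpimg : θbar '' ({(p : MvPolynomial (Fin u) O ⧸ relIdeal p u β W)} :
      Set (MvPolynomial (Fin u) O ⧸ relIdeal p u β W)) = {0} := by
    rw [Set.image_singleton]
    congr 1
    have : θbar ((p : MvPolynomial (Fin u) O ⧸ relIdeal p u β W)) =
        ((p : ℕ) : MvPolynomial (Fin u) (O ⧸ S) ⧸ K) := by
      push_cast
      exact map_natCast θbar p
    rw [this]
    have : ((p : ℕ) : MvPolynomial (Fin u) (O ⧸ S) ⧸ K) =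
        Ideal.Quotient.mk K (C (q (p : O))) := by
      push_cast [map_natCast]
      rfl
    rw [this, hpS, C_0, map_zero]
  rw [himg, hpimg] at h2
  have hzero : Ideal.span ({(0 : MvPolynomial (Fin u) (O ⧸ S) ⧸ K)} :
      Set (MvPolynomial (Fin u) (O ⧸ S) ⧸ K)) = ⊥ := by
    simp [Ideal.span_singleton_eq_bot]
  rw [hzero, sup_bot_eq] at h2
  -- rewrite LHS of h2
  have hLHS : θbar (∑ i : Fin u,
      Ideal.Quotient.mk (relIdeal p u β W) (MvPolynomial.C (α i) * MvPolynomial.X i)) =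
      Ideal.Quotient.mk K (∑ j : Fin u, C (q (α j)) * X j) := by
    rw [map_sum, map_sum]
    congr 1
    ext j
    simp [hθbar, hθ, hψ]
  rw [hLHS] at h2
  -- identify the target ideal with a map of a power
  set I0 : Ideal (MvPolynomial (Fin u) (O ⧸ S)) :=
    Ideal.span (Set.range (X : Fin u → MvPolynomial (Fin u) (O ⧸ S))) with hI0
  have hmapI0 : Ideal.span (Set.range fun i : Fin u =>
      Ideal.Quotient.mk K (X i : MvPolynomial (Fin u) (O ⧸ S))) =
      Ideal.map (Ideal.Quotient.mk K) I0 := by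
    rw [hI0, Ideal.map_span, ← Set.range_comp]
    rfl
  rw [hmapI0, ← Ideal.map_pow (R := MvPolynomial (Fin u) (O ⧸ S))
    (S := MvPolynomial (Fin u) (O ⧸ S) ⧸ K)] at h2
  have hKle : K ≤ I0 ^ p := by
    rw [hK, Ideal.span_le]
    rintro _ ⟨j, rfl⟩
    have hXj : (X j : MvPolynomial (Fin u) (O ⧸ S)) ∈ I0 :=
      Ideal.subset_span (Set.mem_range_self j)
    exact Ideal.pow_mem_pow hXj p
  have h3 : (∑ j : Fin u, C (q (α j)) * X j) ∈ I0 ^ p := by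
    have := Ideal.mem_quotient_iff_mem_sup.mp h2
    rwa [sup_eq_left.mpr hKle] at this
  have h4 : (∑ j : Fin u, C (q (α j)) * X j) ∈ I0 ^ 2 :=
    Ideal.pow_le_pow_right hp.two_le h3
  have h5 := coeff_single_zero_of_mem_sq h4 i
  have hcoeff : coeff (Finsupp.single i 1) (∑ j : Fin u, C (q (α j)) * X j) = q (α i) := by
    rw [coeff_sum]
    rw [Finset.sum_eq_single i]
    · simp [coeff_C_mul]
    · intro j _ hj
      simp [coeff_C_mul, coeff_X', Finsupp.single_eq_single_iff, hj]
    · simp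
  rw [hcoeff] at h5
  exact Ideal.Quotient.eq_zero_iff_mem.mp h5
end
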